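/- arXiv:1307.3122 — 2 statements merged into one kernel-verified Lean document; each statement's English description precedes it below -/
import Mathlib

section
/- Let G be an abelian group and π : H → K a surjective group homomorphism, and let Φ : G ≀ H → G ≀ K be the surjective homomorphism given by Φ(f, h) = (π_* f, π(h)), where (π_* f)(k) = Σ_{h' ∈ π⁻¹(k)} f(h'). Then the kernel of Φ equals the normal closure in G ≀ H of the subgroup {(0, n) : n ∈ ker π}. -/
noncomputable section

/-- The bridge from additive automorphisms of `A` to multiplicative automorphisms of
`Multiplicative A`. -/
def bridge {A : Type} [AddCommGroup A] : Multiplicative (AddAut A) →* MulAut (Multiplicative A) where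
  toFun e := AddEquiv.toMultiplicative (Multiplicative.toAdd e)
  map_one' := rfl
  map_mul' _ _ := rfl

/-- The shift action of `H` on `⊕_H G`: `(h · f)(h') = f (h⁻¹ h')`. -/
def shiftHom (G H : Type) [AddCommGroup G] [Group H] :
    H →* MulAut (Multiplicative (H →₀ G)) :=
  bridge.comp (@DistribMulAction.toAddAut H (H →₀ G) _ _ Finsupp.comapDistribMulAction)

/-- The wreath product `G ≀ H = (⊕_H G) ⋊ H`. -/
abbrev Wreath (G H : Type) [AddCommGroup G] [Group H] : Type :=
  Multiplicative (H →₀ G) ⋊[shiftHom G H] H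

/-- The map `Φ : G ≀ H → G ≀ K` induced by `π : H →* K`. -/
def wreathMap {G H K : Type} [AddCommGroup G] [Group H] [Group K] (π : H →* K)
    (w : Wreath G H) : Wreath G K :=
  ⟨Multiplicative.ofAdd (Finsupp.mapDomain π (Multiplicative.toAdd w.left)), π w.right⟩

section Aux

variable {G H K : Type} [AddCommGroup G] [Group H] [Group K] (π : H →* K)

lemma shiftHom_apply (h : H) (f : Multiplicative (H →₀ G)) :
    shiftHom G H h f = Multiplicative.ofAdd (Finsupp.mapDomain (h * ·) f.toAdd) := rfl

/-- `wreathMap` as a monoid hom. -/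
def wreathMapHom : Wreath G H →* Wreath G K :=
  SemidirectProduct.map
    (AddMonoidHom.toMultiplicative (Finsupp.mapDomain.addMonoidHom π)) π
    (by
      intro h
      refine MonoidHom.ext fun f => ?_
      show Multiplicative.ofAdd (Finsupp.mapDomain π (Finsupp.mapDomain (h * ·)
          (Multiplicative.toAdd f)))
        = Multiplicative.ofAdd (Finsupp.mapDomain (π h * ·) (Finsupp.mapDomain π
          (Multiplicative.toAdd f)))
      rw [← Finsupp.mapDomain_comp, ← Finsupp.mapDomain_comp,
        show (⇑π ∘ fun x => h * x) = ((fun x => π h * x) ∘ ⇑π) from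
          funext fun x => by simp])

lemma wreathMap_eq (w : Wreath G H) : wreathMap π w = wreathMapHom π w := rfl

lemma mul_of_right_one (a b : Multiplicative (H →₀ G)) :
    ((⟨a, 1⟩ : Wreath G H) * ⟨b, 1⟩) = ⟨a * b, 1⟩ := by
  ext : 1
  · show a * shiftHom G H 1 b = a * b
    rw [map_one]; rfl
  · simp

lemma conj_mem (N : Subgroup (Wreath G H)) [N.Normal]
    (hS : ∀ n ∈ π.ker, (⟨1, n⟩ : Wreath G H) ∈ N)
    (a : H →₀ G) (n : H) (hn : n ∈ π.ker) :
    (⟨Multiplicative.ofAdd (a - Finsupp.mapDomain (n * ·) a), 1⟩ : Wreath G H) ∈ N := by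
  have h1 : (⟨1, n⟩ : Wreath G H) ∈ N := hS n hn
  have h2 : (⟨Multiplicative.ofAdd a, 1⟩ : Wreath G H) * ⟨1, n⟩ *
      (⟨Multiplicative.ofAdd a, 1⟩ : Wreath G H)⁻¹ ∈ N :=
    Subgroup.Normal.conj_mem ‹N.Normal› _ h1 _
  have h3 : (⟨1, n⟩ : Wreath G H)⁻¹ ∈ N := N.inv_mem h1
  have h4 := N.mul_mem h2 h3
  convert h4 using 1
  have hneg : ∀ (m : H) (b : H →₀ G), Finsupp.mapDomain (m * ·) (-b)
      = -Finsupp.mapDomain (m * ·) b := fun m b =>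
    (Finsupp.mapDomain.addMonoidHom (m * ·)).map_neg b
  ext : 1
  · show Multiplicative.ofAdd (a - Finsupp.mapDomain (n * ·) a) = _
    simp only [SemidirectProduct.mul_left, SemidirectProduct.inv_left,
      SemidirectProduct.mul_right, SemidirectProduct.inv_right, shiftHom_apply,
      toAdd_one, toAdd_inv, toAdd_ofAdd, Finsupp.mapDomain_zero, ofAdd_zero,
      one_mul, inv_one, mul_one, hneg]
    rw [show (fun x : H => x) = id from rfl, Finsupp.mapDomain_id, hneg,
      ← ofAdd_add, sub_eq_add_neg]
  · simp

end Aux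

theorem wreathMap_ker_eq_normalClosure (G H K : Type) [AddCommGroup G] [Group H] [Group K]
    (π : H →* K) (hπ : Function.Surjective π) :
    {w : Wreath G H | wreathMap (G := G) π w = 1} =
      ↑(Subgroup.normalClosure {w : Wreath G H | w.left = 1 ∧ w.right ∈ π.ker}) := by
  set S : Set (Wreath G H) := {w | w.left = 1 ∧ w.right ∈ π.ker} with hSdef
  set N := Subgroup.normalClosure S with hNdef
  have hS : ∀ n ∈ π.ker, (⟨1, n⟩ : Wreath G H) ∈ N := fun n hn =>
    Subgroup.subset_normalClosure ⟨rfl, hn⟩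
  let s : K → H := Function.surjInv hπ
  have hs : ∀ k, π (s k) = k := Function.surjInv_eq hπ
  have hB : ∀ f : H →₀ G,
      (⟨Multiplicative.ofAdd (f - Finsupp.mapDomain (fun h => s (π h)) f), 1⟩ :
        Wreath G H) ∈ N := by
    intro f
    induction f using Finsupp.induction with
    | zero =>
      have : (⟨Multiplicative.ofAdd
          ((0 : H →₀ G) - Finsupp.mapDomain (fun h => s (π h)) 0), 1⟩ : Wreath G H) = 1 := by
        ext <;> simp
      rw [this]; exact N.one_mem
    | single_add a b f haf hb ih =>
      have hn : s (π a) * a⁻¹ ∈ π.ker := by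
        simp [MonoidHom.mem_ker, hs]
      have key := conj_mem π N hS (Finsupp.single a b) (s (π a) * a⁻¹) hn
      have hmd : Finsupp.mapDomain (fun x => (s (π a) * a⁻¹) * x) (Finsupp.single a b)
          = Finsupp.single (s (π a)) b := by
        rw [Finsupp.mapDomain_single, mul_assoc, inv_mul_cancel, mul_one]
      rw [hmd] at key
      have hmem := N.mul_mem key ih
      rw [mul_of_right_one] at hmem
      convert hmem using 2
      rw [← ofAdd_add]
      congr 1
      rw [Finsupp.mapDomain_add, Finsupp.mapDomain_single]
      abel
  have hker : ∀ f : H →₀ G, Finsupp.mapDomain π f = 0 →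
      (⟨Multiplicative.ofAdd f, 1⟩ : Wreath G H) ∈ N := by
    intro f hf
    have : Finsupp.mapDomain (fun h => s (π h)) f = 0 := by
      rw [show (fun h => s (π h)) = s ∘ ⇑π from rfl, Finsupp.mapDomain_comp, hf,
        Finsupp.mapDomain_zero]
    have h2 := hB f
    rwa [this, sub_zero] at h2
  ext w
  simp only [Set.mem_setOf_eq, SetLike.mem_coe]
  constructor
  · intro hw
    have h1 : Finsupp.mapDomain π (Multiplicative.toAdd w.left) = 0 := by
      have := congrArg SemidirectProduct.left hw
      simpa [wreathMap] using this
    have h2 : w.right ∈ π.ker := by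
      have := congrArg SemidirectProduct.right hw
      simpa [wreathMap, MonoidHom.mem_ker] using this
    have hdecomp : w = (⟨w.left, 1⟩ : Wreath G H) * ⟨1, w.right⟩ := by
      ext : 1
      · show w.left = w.left * (shiftHom G H 1) 1
        simp
      · simp
    rw [hdecomp]
    exact N.mul_mem (by simpa using hker (Multiplicative.toAdd w.left) h1) (hS _ h2)
  · intro hw
    have hle : N ≤ (wreathMapHom (G := G) π).ker := by
      apply Subgroup.normalClosure_le_normal
      rintro x ⟨hx1, hx2⟩
      simp only [SetLike.mem_coe, MonoidHom.mem_ker]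
      ext : 1
      · show Multiplicative.ofAdd (Finsupp.mapDomain π (Multiplicative.toAdd x.left)) = 1
        rw [hx1]
        simp
      · show π x.right = 1
        exact hx2
    have := hle hw
    rw [MonoidHom.mem_ker] at this
    rw [wreathMap_eq]
    exact this

end
end

section
/- Let G be an abelian group with a nested sequence of finite-index subgroups K₁ ⊇ K₂ ⊇ ⋯ satisfying ⋂_i K_i = {0}, and let H be a group with a nested sequence of finite-index normal subgroups N₁ ⊇ N₂ ⊇ ⋯ satisfying ⋂_i N_i = {1}. For each i let π_i : G ≀ H → (G/K_i) ≀ (H/N_i) be the homomorphism sending (f, h) to (f_i, hN_i), where f_i(h'N_i) = Σ_{h'' ∈ h'N_i} f(h'') + K_i, and let M_i = ker π_i. Then each M_i is a finite-index normal subgroup of G ≀ H, the sequence is nested (M_{i+1} ⊆ M_i for all i), and ⋂_i M_i = {1}. -/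
/-!
Statement 9: Let `G` be an abelian group with a nested sequence of finite-index subgroups
`K₁ ⊇ K₂ ⊇ ⋯` with `⋂ Kᵢ = {0}`, and `H` a group with a nested sequence of finite-index
normal subgroups `N₁ ⊇ N₂ ⊇ ⋯` with `⋂ Nᵢ = {1}`.  For each `i`, let
`πᵢ : G ≀ H → (G/Kᵢ) ≀ (H/Nᵢ)` be the homomorphism `(f, h) ↦ (fᵢ, h Nᵢ)` where
`fᵢ(h'Nᵢ) = ∑_{h'' ∈ h'Nᵢ} f h'' + Kᵢ` (implemented as `mapRange` of the quotient map
composed with `mapDomain` of the quotient map), and let `Mᵢ = ker πᵢ`.  Then each `Mᵢ`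
is a finite-index normal subgroup of `G ≀ H`, the sequence is nested, and `⋂ Mᵢ = {1}`.
-/

noncomputable section

/-- The map `πᵢ : G ≀ H → (G/K) ≀ (H/N)`, `(f, h) ↦ (f', h N)`, where
`f'(h'N) = ∑_{h'' ∈ h'N} f h'' + K`. -/
def piMap {G H : Type} [AddCommGroup G] [Group H] (K : AddSubgroup G) (N : Subgroup H)
    [N.Normal] (w : Wreath G H) : Wreath (G ⧸ K) (H ⧸ N) :=
  ⟨Multiplicative.ofAdd
      (Finsupp.mapRange (⇑(QuotientAddGroup.mk' K)) (map_zero _)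
        (Finsupp.mapDomain (⇑(QuotientGroup.mk' N)) (Multiplicative.toAdd w.left))),
    QuotientGroup.mk w.right⟩

namespace Wreathproof

variable {G H : Type} [AddCommGroup G] [Group H]

/-- The additive map on the finsupp part. -/
def Fmap (K : AddSubgroup G) (N : Subgroup H) [N.Normal] :
    (H →₀ G) →+ ((H ⧸ N) →₀ (G ⧸ K)) :=
  (Finsupp.mapRange.addMonoidHom (QuotientAddGroup.mk' K)).comp
    (Finsupp.mapDomain.addMonoidHom (⇑(QuotientGroup.mk' N)))

lemma Fmap_apply (K : AddSubgroup G) (N : Subgroup H) [N.Normal] (f : H →₀ G) :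
    Fmap K N f = Finsupp.mapRange (⇑(QuotientAddGroup.mk' K)) (map_zero _)
      (Finsupp.mapDomain (⇑(QuotientGroup.mk' N)) f) := rfl

lemma Fmap_shift (K : AddSubgroup G) (N : Subgroup H) [N.Normal] (h : H) (f : H →₀ G) :
    Fmap K N (Finsupp.mapDomain (fun y => h * y) f)
      = Finsupp.mapDomain (fun y => (QuotientGroup.mk h : H ⧸ N) * y) (Fmap K N f) := by
  rw [Fmap_apply, Fmap_apply, ← Finsupp.mapDomain_comp]
  have h1 : (⇑(QuotientGroup.mk' N)) ∘ (fun y => h * y)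
      = (fun y => (QuotientGroup.mk h : H ⧸ N) * y) ∘ ⇑(QuotientGroup.mk' N) := by
    funext y; simp [QuotientGroup.mk'_apply, QuotientGroup.mk_mul]
  rw [h1, Finsupp.mapDomain_comp,
    Finsupp.mapDomain_mapRange _ _ _ _ (map_add (QuotientAddGroup.mk' K))]

/-- `piMap` as a `MonoidHom`. -/
def piHom (K : AddSubgroup G) (N : Subgroup H) [N.Normal] :
    Wreath G H →* Wreath (G ⧸ K) (H ⧸ N) where
  toFun := piMap K N
  map_one' := by
    apply SemidirectProduct.ext
    · show Multiplicative.ofAdd (Fmap K N 0) = 1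
      simp
    · rfl
  map_mul' a b := by
    apply SemidirectProduct.ext
    · show Multiplicative.ofAdd (Fmap K N ((a * b).left).toAdd)
        = ((piMap K N a) * (piMap K N b)).left
      have hl : ((a * b).left).toAdd
          = a.left.toAdd + Finsupp.mapDomain (fun y => a.right * y) b.left.toAdd := rfl
      have hr : ((piMap K N a) * (piMap K N b)).left
          = Multiplicative.ofAdd (Fmap K N a.left.toAdd
              + Finsupp.mapDomain (fun y => (QuotientGroup.mk a.right : H ⧸ N) * y)
                  (Fmap K N b.left.toAdd)) := rfl
      rw [hl, hr, map_add, Fmap_shift]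
    · show QuotientGroup.mk (a.right * b.right)
        = QuotientGroup.mk a.right * QuotientGroup.mk b.right
      rfl

lemma mem_ker_iff (K : AddSubgroup G) (N : Subgroup H) [N.Normal] (w : Wreath G H) :
    w ∈ (piHom K N).ker ↔ (Fmap K N w.left.toAdd = 0 ∧ w.right ∈ N) := by
  rw [MonoidHom.mem_ker]
  constructor
  · intro hw
    constructor
    · have := congrArg SemidirectProduct.left hw
      simpa [piHom, piMap, Fmap_apply] using this
    · have := congrArg SemidirectProduct.right hw
      simpa [piHom, piMap, QuotientGroup.eq_one_iff] using this
  · rintro ⟨h1, h2⟩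
    apply SemidirectProduct.ext
    · show Multiplicative.ofAdd (Fmap K N w.left.toAdd) = 1
      rw [h1]; rfl
    · show QuotientGroup.mk w.right = 1
      rwa [QuotientGroup.eq_one_iff]


lemma Fmap_eq_zero_mono {K' K : AddSubgroup G} {N' N : Subgroup H} [N'.Normal] [N.Normal]
    (hK : K' ≤ K) (hN : N' ≤ N) {f : H →₀ G} (h : Fmap K' N' f = 0) : Fmap K N f = 0 := by
  set F2 : ((H ⧸ N') →₀ (G ⧸ K')) →+ ((H ⧸ N) →₀ (G ⧸ K)) :=
    (Finsupp.mapRange.addMonoidHom (QuotientAddGroup.map K' K (AddMonoidHom.id G) hK)).comp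
      (Finsupp.mapDomain.addMonoidHom
        (⇑(QuotientGroup.map N' N (MonoidHom.id H) hN))) with hF2
  have hfac : Fmap K N = F2.comp (Fmap K' N') := by
    apply Finsupp.addHom_ext
    intro a m
    simp [Fmap, hF2, Finsupp.mapDomain_single, Finsupp.mapRange_single]
    rfl
  rw [hfac]
  simp [AddMonoidHom.comp_apply, h]

end Wreathproof

open Wreathproof in
theorem wreath_kernels_nested_finiteIndex_trivial_inter
    (G H : Type) [AddCommGroup G] [Group H]
    (K : ℕ → AddSubgroup G) (N : ℕ → Subgroup H) [inst : ∀ i, (N i).Normal]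
    (hKfi : ∀ i, (K i).FiniteIndex) (hNfi : ∀ i, (N i).FiniteIndex)
    (hKnest : ∀ i, K (i + 1) ≤ K i) (hNnest : ∀ i, N (i + 1) ≤ N i)
    (hKtriv : ⨅ i, K i = ⊥) (hNtriv : ⨅ i, N i = ⊥) :
    ∃ M : ℕ → Subgroup (Wreath G H),
      (∀ i, (M i : Set (Wreath G H)) = {w | piMap (K i) (N i) w = 1}) ∧
      (∀ i, (M i).Normal) ∧ (∀ i, (M i).FiniteIndex) ∧
      (∀ i, M (i + 1) ≤ M i) ∧ (⨅ i, M i = ⊥) := by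
  classical
  have hKanti : Antitone K := antitone_nat_of_succ_le hKnest
  have hNanti : Antitone N := antitone_nat_of_succ_le hNnest
  refine ⟨fun i => (piHom (K i) (N i)).ker, ?_, ?_, ?_, ?_, ?_⟩
  · intro i
    ext w
    simp only [SetLike.mem_coe, MonoidHom.mem_ker, Set.mem_setOf_eq]
    rfl
  · intro i; exact MonoidHom.normal_ker _
  · intro i
    haveI := hKfi i
    haveI := hNfi i
    haveI : Finite (G ⧸ K i) := AddSubgroup.finite_quotient_of_finiteIndex
    haveI : Finite (H ⧸ N i) := Subgroup.finite_quotient_of_finiteIndex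
    haveI : Finite ((H ⧸ N i) →₀ (G ⧸ K i)) :=
      Finite.of_injective (fun (f : (H ⧸ N i) →₀ (G ⧸ K i)) => ⇑f) DFunLike.coe_injective
    haveI : Finite (Wreath (G ⧸ K i) (H ⧸ N i)) := by
      apply Finite.of_injective (fun w => (w.left, w.right))
      intro a b hab
      exact SemidirectProduct.ext (congrArg Prod.fst hab) (congrArg Prod.snd hab)
    exact Subgroup.finiteIndex_ker _
  · intro i w hw
    rw [mem_ker_iff] at hw ⊢
    exact ⟨Fmap_eq_zero_mono (hKnest i) (hNnest i) hw.1, hNnest i hw.2⟩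
  · -- trivial intersection
    rw [eq_bot_iff]
    intro w hw
    rw [Subgroup.mem_iInf] at hw
    simp only [mem_ker_iff] at hw
    rw [Subgroup.mem_bot]
    have hright : w.right = 1 := by
      have : w.right ∈ ⨅ i, N i := Subgroup.mem_iInf.2 fun i => (hw i).2
      rwa [hNtriv, Subgroup.mem_bot] at this
    have hleft : w.left.toAdd = 0 := by
      set f := w.left.toAdd with hf
      ext h'
      by_cases hsupp : h' ∈ f.support
      swap
      · simpa using Finsupp.notMem_support_iff.1 hsupp
      have key : ∀ m, f h' ∈ K m := by
        intro m
        have hsep : ∀ s t : H, s ≠ t → ∃ i, s⁻¹ * t ∉ N i := by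
          intro s t hst
          by_contra hc
          push_neg at hc
          have : s⁻¹ * t ∈ ⨅ i, N i := Subgroup.mem_iInf.2 hc
          rw [hNtriv, Subgroup.mem_bot] at this
          exact hst (inv_mul_eq_one.mp this)
        set c : H × H → ℕ := fun p =>
          if hp : p.1 ≠ p.2 then (hsep p.1 p.2 hp).choose else 0 with hc
        set j : ℕ := m ⊔ (f.support ×ˢ f.support).sup c with hj
        have hinj : Set.InjOn (⇑(QuotientGroup.mk' (N j))) ↑f.support := by
          intro s hs t ht hst
          by_contra hne
          have hcm : c (s, t) ≤ j := le_sup_of_le_right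
            (Finset.le_sup (Finset.mk_mem_product hs ht))
          have hmem : s⁻¹ * t ∈ N j := QuotientGroup.eq.mp (by simpa using hst)
          have : s⁻¹ * t ∈ N (c (s, t)) := hNanti hcm hmem
          rw [hc] at this
          simp only [hne, ne_eq, not_false_iff, dif_pos] at this
          exact (hsep s t hne).choose_spec this
        have heval : (Finsupp.mapDomain (⇑(QuotientGroup.mk' (N j))) f)
            (QuotientGroup.mk' (N j) h') = f h' :=
          Finsupp.mapDomain_apply' ↑f.support f le_rfl hinj hsupp
        have h0 : Fmap (K j) (N j) f = 0 := (hw j).1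
        rw [Fmap_apply] at h0
        have := congrArg (fun v => v (QuotientGroup.mk' (N j) h')) h0
        simp only [Finsupp.mapRange_apply, heval, Finsupp.coe_zero, Pi.zero_apply] at this
        have hKj : f h' ∈ K j := (QuotientAddGroup.eq_zero_iff _).1 this
        exact hKanti (le_max_left m _) hKj
      have hz : f h' ∈ ⨅ m, K m := AddSubgroup.mem_iInf.2 key
      rw [hKtriv, AddSubgroup.mem_bot] at hz
      simpa using hz
    apply SemidirectProduct.ext
    · show w.left = 1
      have : w.left.toAdd = (1 : Multiplicative (H →₀ G)).toAdd := hleft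
      exact Multiplicative.toAdd.injective this
    · exact hright

end
end
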